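/- Let p: E → B be a Serre microfibration, (Y, X) a finite CW pair, F: Y → B a map, and f: X → E a map with p ∘ f = F|_X. Suppose there exists a map G: Y → E with p ∘ G = F such that G|_X is fibrewise homotopic to f, i.e. there is a homotopy φ: [0,1] × X → E from G|_X to f with p(φ(t,x)) = F(x) for all t ∈ [0,1] and x ∈ X. Then there exists a map H: Y → E with p ∘ H = F and H|_X = f. -/

import Mathlib

noncomputable section

/-- The closed unit disc `D^k ⊆ ℝ^k`. -/
abbrev Disk (k : ℕ) : Type := ↥(Metric.closedBall (0 : EuclideanSpace ℝ (Fin k)) 1)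

/-- `p : E → B` is a Serre microfibration if for every `k` and every lifting problem
`f : {0} × D^k → E`, `h : [0,1] × D^k → B` with `p ∘ f = h(0, -)`, there is `ε > 0` and a
partial lift `H` defined for times `t ≤ ε` starting at `f`.  (We encode a map on
`[0,ε] × D^k` as a map on `[0,1] × D^k` whose lifting property is only required
for `t ≤ ε`.) -/
def IsSerreMicrofibration {E B : Type*} [TopologicalSpace E] [TopologicalSpace B]
    (p : E → B) : Prop :=
  Continuous p ∧
    ∀ (k : ℕ) (f : C(Disk k, E)) (h : C(unitInterval × Disk k, B)),
      (∀ x, h (0, x) = p (f x)) →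
      ∃ ε : ℝ, 0 < ε ∧ ∃ H : C(unitInterval × Disk k, E),
        (∀ x, H (0, x) = f x) ∧
          ∀ (t : unitInterval) (x : Disk k), (t : ℝ) ≤ ε → p (H (t, x)) = h (t, x)

/-- `B` is obtained from `A ⊆ B` by attaching a single `n`-cell: there is a
characteristic map `Φ : D^n → Y` with image in `B`, carrying `∂D^n = S^{n-1}` into `A`,
with `B = A ∪ Φ(D^n)`, mapping the open ball bijectively onto `B \ A`, and such that
`B` carries the weak topology determined by `A` and `Φ`. -/
def IsCellAttachment {Y : Type*} [TopologicalSpace Y] (A B : Set Y) (n : ℕ) : Prop :=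
  A ⊆ B ∧ ∃ Φ : EuclideanSpace ℝ (Fin n) → Y,
    ContinuousOn Φ (Metric.closedBall 0 1) ∧
    B = A ∪ Φ '' Metric.closedBall 0 1 ∧
    Φ '' Metric.sphere 0 1 ⊆ A ∧
    Set.InjOn Φ (Metric.ball 0 1) ∧
    Φ '' Metric.ball 0 1 = B \ A ∧
    ∀ C : Set Y, C ⊆ B →
      IsClosed {a : ↥A | (a : Y) ∈ C} →
      IsClosed {x : ↥(Metric.closedBall (0 : EuclideanSpace ℝ (Fin n)) 1) | Φ ↑x ∈ C} →
      IsClosed {b : ↥B | (b : Y) ∈ C}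

/-- `Y` is obtained from the subspace `X` by attaching finitely many cells. -/
def IsFiniteRelCW {Y : Type*} [TopologicalSpace Y] (X : Set Y) : Prop :=
  ∃ (m : ℕ) (F : ℕ → Set Y), F 0 = X ∧ F m = Set.univ ∧
    ∀ k < m, ∃ n, IsCellAttachment (F k) (F (k + 1)) n

/-- A finite CW complex: a Hausdorff space built from `∅` by finitely many
cell attachments. -/
def IsFiniteCW (Z : Type*) [TopologicalSpace Z] : Prop :=
  T2Space Z ∧ IsFiniteRelCW (∅ : Set Z)

/-- `(Y, X)` is a finite CW pair: `Y` is Hausdorff, `X ⊆ Y` is closed, `X` is a finite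
CW complex, and `Y` is obtained from `X` by attaching finitely many cells. -/
def IsFiniteCWPair {Y : Type*} [TopologicalSpace Y] (X : Set Y) : Prop :=
  T2Space Y ∧ IsClosed X ∧ IsFiniteCW ↥X ∧ IsFiniteRelCW X


open Set Metric unitInterval


section Paste
variable {XX Z : Type*} [TopologicalSpace XX] [TopologicalSpace Z]

theorem paste_exists {s t : Set XX} (hs : IsClosed s) (ht : IsClosed t)
    (hcov : ∀ x, x ∈ s ∪ t) (f : C(s, Z)) (g : C(t, Z))
    (hfg : ∀ (x : XX) (hxs : x ∈ s) (hxt : x ∈ t), f ⟨x, hxs⟩ = g ⟨x, hxt⟩) :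
    ∃ F : C(XX, Z), (∀ x (hx : x ∈ s), F x = f ⟨x, hx⟩) ∧ ∀ x (hx : x ∈ t), F x = g ⟨x, hx⟩ := by
  classical
  have hmem : ∀ x : XX, x ∉ s → x ∈ t := by
    intro x hx
    rcases hcov x with h | h
    · exact absurd h hx
    · exact h
  set F0 : XX → Z := fun x => if hx : x ∈ s then f ⟨x, hx⟩ else g ⟨x, hmem x hx⟩ with hF0
  have e1 : ∀ x (hx : x ∈ s), F0 x = f ⟨x, hx⟩ := by
    intro x hx; simp only [hF0, dif_pos hx]
  have e2 : ∀ x (hx : x ∈ t), F0 x = g ⟨x, hx⟩ := by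
    intro x hx
    by_cases hxs : x ∈ s
    · rw [e1 x hxs]; exact hfg x hxs hx
    · simp only [hF0, dif_neg hxs]
  have hcont : Continuous F0 := by
    rw [continuous_iff_isClosed]
    intro C hC
    have key : F0 ⁻¹' C =
        (Subtype.val '' ((f ⁻¹' C : Set s))) ∪ (Subtype.val '' ((g ⁻¹' C : Set t))) := by
      ext x
      constructor
      · intro hx
        by_cases hxs : x ∈ s
        · refine Or.inl ⟨⟨x, hxs⟩, ?_, rfl⟩
          rw [Set.mem_preimage, ← e1 x hxs]; exact hx
        · refine Or.inr ⟨⟨x, hmem x hxs⟩, ?_, rfl⟩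
          rw [Set.mem_preimage, ← e2 x (hmem x hxs)]; exact hx
      · rintro (⟨y, hy, rfl⟩ | ⟨y, hy, rfl⟩)
        · simpa [e1 _ y.2] using hy
        · simpa [e2 _ y.2] using hy
    rw [key]
    exact ((hs.isClosedEmbedding_subtypeVal.isClosedMap _ (hC.preimage f.continuous))).union
      (ht.isClosedEmbedding_subtypeVal.isClosedMap _ (hC.preimage g.continuous))
  exact ⟨⟨F0, hcont⟩, e1, e2⟩

end Paste

section Glue
variable {Y Z : Type*} [TopologicalSpace Y] [TopologicalSpace Z]

theorem attach_glue {A Bs : Set Y} {n : ℕ} {Φ : EuclideanSpace ℝ (Fin n) → Y}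
    (hSph : Φ '' Metric.sphere 0 1 ⊆ A)
    (hInj : Set.InjOn Φ (Metric.ball 0 1))
    (hBall : Φ '' Metric.ball 0 1 = Bs \ A)
    (hWeak : ∀ C : Set Y, C ⊆ Bs →
      IsClosed {a : ↥A | (a : Y) ∈ C} →
      IsClosed {x : Disk n | Φ ↑x ∈ C} →
      IsClosed {b : ↥Bs | (b : Y) ∈ C})
    (hAB : A ⊆ Bs)
    (gA : C(↥A, Z)) (gD : C(Disk n, Z))
    (hcompat : ∀ (x : Disk n) (hx : Φ ↑x ∈ A), gD x = gA ⟨Φ ↑x, hx⟩) :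
    ∃ gB : C(↥Bs, Z), (∀ (y : Y) (ha : y ∈ A) (hb : y ∈ Bs), gB ⟨y, hb⟩ = gA ⟨y, ha⟩) ∧
      ∀ (x : Disk n) (hb : Φ ↑x ∈ Bs), gB ⟨Φ ↑x, hb⟩ = gD x := by
  classical
  have hpre : ∀ (b : ↥Bs), (b : Y) ∉ A → (b : Y) ∈ Φ '' Metric.ball 0 1 := by
    intro b hb; rw [hBall]; exact ⟨b.2, hb⟩
  set gB0 : ↥Bs → Z := fun b =>
    if hb : (b : Y) ∈ A then gA ⟨b, hb⟩
    else gD ⟨(hpre b hb).choose, Metric.ball_subset_closedBall (hpre b hb).choose_spec.1⟩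
    with hgB0
  have e1 : ∀ (y : Y) (ha : y ∈ A) (hb : y ∈ Bs), gB0 ⟨y, hb⟩ = gA ⟨y, ha⟩ := by
    intro y ha hb; simp only [hgB0]; rw [dif_pos ha]
  have memD : ∀ (x : Disk n), (x : EuclideanSpace ℝ (Fin n)) ∉ Metric.ball 0 1 →
      Φ ↑x ∈ A := by
    intro x hx
    apply hSph
    refine ⟨↑x, ?_, rfl⟩
    have h1 : ‖(x : EuclideanSpace ℝ (Fin n))‖ ≤ 1 := by
      have := x.2; rwa [Metric.mem_closedBall, dist_zero_right] at this
    have h2 : ¬ ‖(x : EuclideanSpace ℝ (Fin n))‖ < 1 := by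
      intro h; exact hx (by rwa [Metric.mem_ball, dist_zero_right])
    rw [mem_sphere_zero_iff_norm]
    linarith [lt_or_eq_of_le h1, (not_lt.mp h2)]
  have e2 : ∀ (x : Disk n) (hb : Φ ↑x ∈ Bs), gB0 ⟨Φ ↑x, hb⟩ = gD x := by
    intro x hb
    by_cases hx : Φ ↑x ∈ A
    · rw [e1 _ hx hb, ← hcompat x hx]
    · simp only [hgB0]
      rw [dif_neg hx]
      have hsp := (hpre ⟨Φ ↑x, hb⟩ hx).choose_spec
      have hxball : (x : EuclideanSpace ℝ (Fin n)) ∈ Metric.ball 0 1 := by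
        by_contra hxb
        exact hx (memD x hxb)
      congr 1
      exact Subtype.ext (hInj hsp.1 hxball hsp.2)
  have hcont : Continuous gB0 := by
    rw [continuous_iff_isClosed]
    intro C hC
    set CC : Set Y := Subtype.val '' (gB0 ⁻¹' C) with hCC
    have hCB : CC ⊆ Bs := by rintro y ⟨b, _, rfl⟩; exact b.2
    have hmemCC : ∀ (y : Y) (hy : y ∈ Bs), y ∈ CC ↔ gB0 ⟨y, hy⟩ ∈ C := by
      intro y hy
      constructor
      · rintro ⟨b, hb, rfl⟩
        have : b = ⟨(b : Y), hy⟩ := Subtype.ext rfl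
        rwa [← this]
      · intro h; exact ⟨⟨y, hy⟩, h, rfl⟩
    have hA' : IsClosed {a : ↥A | (a : Y) ∈ CC} := by
      have : {a : ↥A | (a : Y) ∈ CC} = gA ⁻¹' C := by
        ext a
        rw [Set.mem_setOf_eq, hmemCC _ (hAB a.2), Set.mem_preimage,
          e1 _ a.2 (hAB a.2)]
      rw [this]; exact hC.preimage gA.continuous
    have hD' : IsClosed {x : Disk n | Φ ↑x ∈ CC} := by
      have : {x : Disk n | Φ ↑x ∈ CC} = gD ⁻¹' C := by
        ext x
        have hbx : Φ ↑x ∈ Bs := by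
          by_cases hx : Φ ↑x ∈ A
          · exact hAB hx
          · have : (x : EuclideanSpace ℝ (Fin n)) ∈ Metric.ball 0 1 := by
              by_contra hxb; exact hx (memD x hxb)
            have := hBall ▸ Set.mem_image_of_mem Φ this
            exact this.1
        rw [Set.mem_setOf_eq, hmemCC _ hbx, Set.mem_preimage, e2 x hbx]
      rw [this]; exact hC.preimage gD.continuous
    have := hWeak CC hCB hA' hD'
    have heq : {b : ↥Bs | (b : Y) ∈ CC} = gB0 ⁻¹' C := by
      ext b
      rw [Set.mem_setOf_eq, hmemCC _ b.2, Set.mem_preimage]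
    rwa [heq] at this
  exact ⟨⟨gB0, hcont⟩, e1, e2⟩

end Glue


namespace SMF

def qbar (a : ℝ) : ℝ := min (3 * a) 1

def tfun (ε r : ℝ) : ℝ := min ε (4 * (1 - r))

def sigsc (ε r : ℝ) : ℝ := min (max (r / (3 - 2 * ε)) ((r - 1 + ε) / ε)) (3 / 4)

def Sigsc (ε s r : ℝ) : ℝ := (1 - s) / 3 * r + s * sigsc ε r

def tau1 (ε s : ℝ) : ℝ := s * ε / ((3 - 2 * ε) * (1 - s) / 3 + s)

def tau2 (ε s r : ℝ) : ℝ :=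
  (min (3 * Sigsc ε s r) 1 - r) / (max (min (3 * Sigsc ε s r) 1 - Sigsc ε s r) (2 / 9))

def taufun (ε s r : ℝ) : ℝ := if r ≤ 1 - 2 * ε / 3 then tau1 ε s else tau2 ε s r

variable {ε s r a : ℝ}

lemma e3pos (hε1 : ε ≤ 1) : (0:ℝ) < 3 - 2 * ε := by linarith

lemma sigsc_low (hε0 : 0 < ε) (hε1 : ε ≤ 1) (hr : r ≤ 1 - 2 * ε / 3) :
    sigsc ε r = r / (3 - 2 * ε) := by
  have h3 := e3pos hε1
  have hmax : (r - 1 + ε) / ε ≤ r / (3 - 2 * ε) := by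
    rw [div_le_div_iff₀ hε0 h3]; nlinarith
  have hmin : r / (3 - 2 * ε) ≤ 3 / 4 := by
    rw [div_le_iff₀ h3]; nlinarith
  rw [sigsc, max_eq_left hmax, min_eq_left hmin]

lemma sigsc_mid (hε0 : 0 < ε) (hε1 : ε ≤ 1) (hr : 1 - 2 * ε / 3 ≤ r) (hr' : r ≤ 1 - ε / 4) :
    sigsc ε r = (r - 1 + ε) / ε := by
  have h3 := e3pos hε1
  have hmax : r / (3 - 2 * ε) ≤ (r - 1 + ε) / ε := by
    rw [div_le_div_iff₀ h3 hε0]; nlinarith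
  have hmin : (r - 1 + ε) / ε ≤ 3 / 4 := by
    rw [div_le_iff₀ hε0]; linarith
  rw [sigsc, max_eq_right hmax, min_eq_left hmin]

lemma sigsc_hi (hε0 : 0 < ε) (hr : 1 - ε / 4 ≤ r) : sigsc ε r = 3 / 4 := by
  have : (3:ℝ) / 4 ≤ (r - 1 + ε) / ε := by
    rw [le_div_iff₀ hε0]; linarith
  exact min_eq_right (le_trans this (le_max_right _ _))

lemma sigsc_nonneg (hε1 : ε ≤ 1) (hr0 : 0 ≤ r) : 0 ≤ sigsc ε r := by
  have h3 := e3pos hε1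
  have : (0:ℝ) ≤ r / (3 - 2 * ε) := div_nonneg hr0 (le_of_lt h3)
  exact le_min (le_max_of_le_left this) (by norm_num)

lemma sigsc_le : sigsc ε r ≤ 3 / 4 := min_le_right _ _

lemma sigsc_le_one : sigsc ε r ≤ 1 := le_trans sigsc_le (by norm_num)

lemma sigsc_ge_third (hε0 : 0 < ε) (hr : 1 - 2 * ε / 3 ≤ r) : 1 / 3 ≤ sigsc ε r := by
  have : (1:ℝ) / 3 ≤ (r - 1 + ε) / ε := by
    rw [le_div_iff₀ hε0]; linarith
  exact le_min (le_max_of_le_right this) (by norm_num)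

lemma sigsc_ge_r3 (hε0 : 0 < ε) (hε1 : ε ≤ 1) (hr0 : 0 ≤ r) (hr1 : r ≤ 1) :
    r / 3 ≤ sigsc ε r := by
  have h3 := e3pos hε1
  have h1 : r / 3 ≤ r / (3 - 2 * ε) := by
    rw [div_le_div_iff₀ (by norm_num) h3]; nlinarith
  exact le_min (le_max_of_le_left h1) (by linarith)

lemma tfun_nonneg (hε0 : 0 < ε) (hr1 : r ≤ 1) : 0 ≤ tfun ε r :=
  le_min (le_of_lt hε0) (by linarith)

lemma tfun_le : tfun ε r ≤ ε := min_le_left _ _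

lemma tfun_le_one (hε1 : ε ≤ 1) : tfun ε r ≤ 1 := le_trans (min_le_left _ _) hε1

lemma qbar_self_le (ha0 : 0 ≤ a) (ha1 : a ≤ 1) : a ≤ qbar a := by
  exact le_min (by linarith) ha1

/-- The fundamental identity for `tfun`. -/
lemma id_t (hε0 : 0 < ε) (hε1 : ε ≤ 1) (hr0 : 0 ≤ r) (hr1 : r ≤ 1) :
    (1 - tfun ε r) * qbar (sigsc ε r) + tfun ε r * sigsc ε r = r := by
  have h3 := e3pos hε1
  rcases le_or_gt r (1 - 2 * ε / 3) with hc1 | hc1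
  · rw [sigsc_low hε0 hε1 hc1]
    have hq : qbar (r / (3 - 2 * ε)) = 3 * (r / (3 - 2 * ε)) := by
      rw [qbar, min_eq_left]
      rw [show (3:ℝ) * (r / (3 - 2 * ε)) = 3 * r / (3 - 2 * ε) from by ring,
        div_le_iff₀ h3]
      nlinarith
    have ht : tfun ε r = ε := min_eq_left (by linarith)
    rw [hq, ht]
    field_simp
    have hinv : (3 - ε * 2) * (3 - ε * 2)⁻¹ = 1 := mul_inv_cancel₀ (by linarith)
    linear_combination r * hinv
  · rcases le_or_gt r (1 - ε / 4) with hc2 | hc2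
    · rw [sigsc_mid hε0 hε1 (le_of_lt hc1) hc2]
      have hq : qbar ((r - 1 + ε) / ε) = 1 := by
        rw [qbar, min_eq_right]
        rw [show (3:ℝ) * ((r - 1 + ε) / ε) = 3 * (r - 1 + ε) / ε from by ring,
          le_div_iff₀ hε0]
        linarith
      have ht : tfun ε r = ε := min_eq_left (by linarith)
      rw [hq, ht]
      field_simp
      ring
    · rw [sigsc_hi hε0 (le_of_lt hc2)]
      have hq : qbar (3 / 4) = 1 := by rw [qbar]; norm_num
      have ht : tfun ε r = 4 * (1 - r) := min_eq_right (by linarith)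
      rw [hq, ht]
      ring

lemma Sigsc_nonneg (hε1 : ε ≤ 1) (hs0 : 0 ≤ s) (hs1 : s ≤ 1) (hr0 : 0 ≤ r) :
    0 ≤ Sigsc ε s r := by
  have h0 := sigsc_nonneg (ε := ε) hε1 hr0
  have h1 : (0:ℝ) ≤ (1 - s) / 3 * r := by
    apply mul_nonneg (by linarith) hr0
  rw [Sigsc]
  nlinarith

lemma Sigsc_le (hε1 : ε ≤ 1) (hs0 : 0 ≤ s) (hs1 : s ≤ 1) (hr0 : 0 ≤ r) (hr1 : r ≤ 1) :
    Sigsc ε s r ≤ 3 / 4 := by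
  have h2 := sigsc_le (ε := ε) (r := r)
  have h1 : (1 - s) / 3 * r ≤ (1 - s) * (3 / 4) := by nlinarith
  rw [Sigsc]
  nlinarith

lemma Sigsc_ge_r3 (hε0 : 0 < ε) (hε1 : ε ≤ 1) (hs0 : 0 ≤ s) (hs1 : s ≤ 1)
    (hr0 : 0 ≤ r) (hr1 : r ≤ 1) : r / 3 ≤ Sigsc ε s r := by
  have := sigsc_ge_r3 hε0 hε1 hr0 hr1
  rw [Sigsc]
  nlinarith

lemma tau1_denom_pos (hε1 : ε ≤ 1) (hs0 : 0 ≤ s) (hs1 : s ≤ 1) :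
    1 / 3 ≤ (3 - 2 * ε) * (1 - s) / 3 + s := by
  have h3 := e3pos hε1
  nlinarith

lemma tau1_nonneg (hε0 : 0 < ε) (hε1 : ε ≤ 1) (hs0 : 0 ≤ s) (hs1 : s ≤ 1) :
    0 ≤ tau1 ε s := by
  have hd := tau1_denom_pos (ε := ε) hε1 hs0 hs1
  exact div_nonneg (by positivity) (by linarith)

lemma tau1_le (hε0 : 0 < ε) (hε1 : ε ≤ 1) (hs0 : 0 ≤ s) (hs1 : s ≤ 1) :
    tau1 ε s ≤ ε := by
  have hd := tau1_denom_pos (ε := ε) hε1 hs0 hs1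
  rw [tau1, div_le_iff₀ (by linarith)]
  have h3 := e3pos hε1
  nlinarith [mul_nonneg (mul_nonneg hε0.le (le_of_lt h3)) (by linarith : (0:ℝ) ≤ 1 - s)]

/-- identity in the low range. -/
lemma id_tau_low (hε0 : 0 < ε) (hε1 : ε ≤ 1) (hs0 : 0 ≤ s) (hs1 : s ≤ 1)
    (hr0 : 0 ≤ r) (hr : r ≤ 1 - 2 * ε / 3) :
    (1 - tau1 ε s) * qbar (Sigsc ε s r) + tau1 ε s * Sigsc ε s r = r := by
  have h3 := e3pos hε1
  have hd := tau1_denom_pos (ε := ε) hε1 hs0 hs1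
  rw [Sigsc, sigsc_low hε0 hε1 hr]
  have key : r / (3 - 2 * ε) ≤ 1 / 3 := by
    rw [div_le_iff₀ h3]; nlinarith
  have hr1 : r ≤ 1 := by linarith
  have hSg : (1 - s) / 3 * r + s * (r / (3 - 2 * ε)) ≤ 1 / 3 := by
    have k1 : (1 - s) / 3 * r ≤ (1 - s) / 3 := by nlinarith
    have k2 : s * (r / (3 - 2 * ε)) ≤ s / 3 := by nlinarith
    linarith
  have hq : qbar ((1 - s) / 3 * r + s * (r / (3 - 2 * ε))) =
      3 * ((1 - s) / 3 * r + s * (r / (3 - 2 * ε))) := by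
    rw [qbar, min_eq_left]; linarith
  set Sg := (1 - s) / 3 * r + s * (r / (3 - 2 * ε)) with hSgdef
  have hD0 : ((3 - 2 * ε) * (1 - s) / 3 + s) ≠ 0 := by
    intro h; rw [h] at hd; norm_num at hd
  have hmain : tau1 ε s * (2 * Sg) = 3 * Sg - r := by
    rw [tau1, div_mul_eq_mul_div, div_eq_iff hD0, hSgdef]
    field_simp
    have hinv : (3 - ε * 2) * (3 - ε * 2)⁻¹ = 1 := mul_inv_cancel₀ (by linarith)
    linear_combination (-3 * s * r) * hinv
  have key : (1 - tau1 ε s) * (3 * Sg) + tau1 ε s * Sg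
      = 3 * Sg - tau1 ε s * (2 * Sg) := by ring
  rw [hq, key, hmain]
  ring

/-- identity in the high range. -/
lemma id_tau_high (hε0 : 0 < ε) (hε1 : ε ≤ 1) (hs0 : 0 ≤ s) (hs1 : s ≤ 1)
    (hr : 1 - 2 * ε / 3 ≤ r) (hr1 : r ≤ 1) :
    (1 - tau2 ε s r) * qbar (Sigsc ε s r) + tau2 ε s r * Sigsc ε s r = r := by
  have h3 := e3pos hε1
  have hr0 : 0 ≤ r := by linarith
  set Sg := Sigsc ε s r with hSgdef
  have hSg19 : 1 / 9 ≤ Sg := by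
    have := Sigsc_ge_r3 hε0 hε1 hs0 hs1 hr0 hr1
    have : r / 3 ≤ Sg := this
    nlinarith
  have hSg34 : Sg ≤ 3 / 4 := Sigsc_le hε1 hs0 hs1 hr0 hr1
  have hqb : qbar Sg = min (3 * Sg) 1 := rfl
  rcases le_or_gt (3 * Sg) 1 with hc | hc
  · have hm : min (3 * Sg) 1 = 3 * Sg := min_eq_left hc
    have hden : min (3 * Sg) 1 - Sg = 2 * Sg := by rw [hm]; ring
    have hmax : max (min (3 * Sg) 1 - Sg) (2 / 9) = 2 * Sg := by
      rw [hden]; exact max_eq_left (by linarith)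
    rw [tau2, ← hSgdef, hmax, hqb, hm]
    field_simp
    ring
  · have hm : min (3 * Sg) 1 = 1 := min_eq_right (le_of_lt hc)
    have hmax : max (min (3 * Sg) 1 - Sg) (2 / 9) = 1 - Sg := by
      rw [hm]; exact max_eq_left (by linarith)
    rw [tau2, ← hSgdef, hmax, hqb, hm]
    have h1Sg : (0:ℝ) < 1 - Sg := by linarith
    field_simp
    ring

lemma qbar_ge_self (ha0 : 0 ≤ a) (ha1 : a ≤ 1) : a ≤ qbar a :=
  le_min (by linarith) ha1

def gfun (ε x : ℝ) : ℝ := (1 - ε) * qbar x + ε * x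

lemma gfun_mono (hε0 : 0 ≤ ε) (hε1 : ε ≤ 1) {x y : ℝ} (hxy : x ≤ y) :
    gfun ε x ≤ gfun ε y := by
  have h1 : qbar x ≤ qbar y := min_le_min (by linarith) le_rfl
  have h2 : (0:ℝ) ≤ 1 - ε := by linarith
  rw [gfun, gfun]
  nlinarith

lemma gfun_r3 (hε0 : 0 ≤ ε) (hr0 : 0 ≤ r) (hr1 : r ≤ 1) : gfun ε (r / 3) ≤ r := by
  have h1 : qbar (r / 3) = r := by
    rw [qbar, min_eq_left (by linarith)]; ring
  rw [gfun, h1]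
  nlinarith

lemma gfun_sig (hε0 : 0 < ε) (hε1 : ε ≤ 1) (hr0 : 0 ≤ r) (hr1 : r ≤ 1) :
    gfun ε (sigsc ε r) ≤ r := by
  have hid := id_t hε0 hε1 hr0 hr1
  have ht0 := tfun_nonneg hε0 hr1
  have ht1 := tfun_le (ε := ε) (r := r)
  have hσ0 := sigsc_nonneg (ε := ε) hε1 hr0
  have hσ1 := sigsc_le_one (ε := ε) (r := r)
  have hqσ := qbar_ge_self hσ0 hσ1
  rw [gfun]
  nlinarith

lemma Sigsc_le_max (hs0 : 0 ≤ s) (hs1 : s ≤ 1) :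
    Sigsc ε s r ≤ max (r / 3) (sigsc ε r) := by
  rcases le_total (r / 3) (sigsc ε r) with h | h
  · rw [max_eq_right h, Sigsc]; nlinarith
  · rw [max_eq_left h, Sigsc]; nlinarith

lemma gfun_Sigsc_le (hε0 : 0 < ε) (hε1 : ε ≤ 1) (hs0 : 0 ≤ s) (hs1 : s ≤ 1)
    (hr0 : 0 ≤ r) (hr1 : r ≤ 1) : gfun ε (Sigsc ε s r) ≤ r := by
  have h1 := Sigsc_le_max (ε := ε) (s := s) (r := r) hs0 hs1
  have h2 := gfun_mono (ε := ε) hε0.le hε1 h1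
  rcases le_total (r / 3) (sigsc ε r) with h | h
  · rw [max_eq_right h] at h2
    exact le_trans h2 (gfun_sig hε0 hε1 hr0 hr1)
  · rw [max_eq_left h] at h2
    exact le_trans h2 (gfun_r3 hε0.le hr0 hr1)

lemma tau2_facts (hε0 : 0 < ε) (hε1 : ε ≤ 1) (hs0 : 0 ≤ s) (hs1 : s ≤ 1)
    (hr : 1 - 2 * ε / 3 ≤ r) (hr1 : r ≤ 1) :
    max (min (3 * Sigsc ε s r) 1 - Sigsc ε s r) (2 / 9)
      = min (3 * Sigsc ε s r) 1 - Sigsc ε s r ∧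
    0 ≤ tau2 ε s r ∧ tau2 ε s r ≤ ε := by
  have hr0 : 0 ≤ r := by linarith
  set Sg := Sigsc ε s r with hSgdef
  have hSg19 : 1 / 9 ≤ Sg := by
    have := Sigsc_ge_r3 hε0 hε1 hs0 hs1 hr0 hr1
    nlinarith
  have hSg34 : Sg ≤ 3 / 4 := Sigsc_le hε1 hs0 hs1 hr0 hr1
  have hden : 2 / 9 ≤ min (3 * Sg) 1 - Sg := by
    rcases le_total (3 * Sg) 1 with h | h
    · rw [min_eq_left h]; linarith
    · rw [min_eq_right h]; linarith
  have hmax : max (min (3 * Sg) 1 - Sg) (2 / 9) = min (3 * Sg) 1 - Sg :=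
    max_eq_left hden
  have hnum : 0 ≤ min (3 * Sg) 1 - r := by
    have := Sigsc_ge_r3 hε0 hε1 hs0 hs1 hr0 hr1
    exact sub_nonneg.mpr (le_min (by nlinarith) hr1)
  have hdenpos : (0:ℝ) < min (3 * Sg) 1 - Sg := by linarith
  refine ⟨hmax, ?_, ?_⟩
  · rw [tau2, ← hSgdef, hmax]
    exact div_nonneg hnum hdenpos.le
  · rw [tau2, ← hSgdef, hmax, div_le_iff₀ hdenpos]
    have hg := gfun_Sigsc_le hε0 hε1 hs0 hs1 hr0 hr1
    rw [gfun] at hg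
    have hqb : qbar Sg = min (3 * Sg) 1 := rfl
    rw [hqb] at hg
    nlinarith

lemma taufun_nonneg (hε0 : 0 < ε) (hε1 : ε ≤ 1) (hs0 : 0 ≤ s) (hs1 : s ≤ 1)
    (hr0 : 0 ≤ r) (hr1 : r ≤ 1) : 0 ≤ taufun ε s r := by
  rw [taufun]
  split_ifs with h
  · exact tau1_nonneg hε0 hε1 hs0 hs1
  · exact (tau2_facts hε0 hε1 hs0 hs1 (le_of_lt (not_le.mp h)) hr1).2.1

lemma taufun_le (hε0 : 0 < ε) (hε1 : ε ≤ 1) (hs0 : 0 ≤ s) (hs1 : s ≤ 1)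
    (hr0 : 0 ≤ r) (hr1 : r ≤ 1) : taufun ε s r ≤ ε := by
  rw [taufun]
  split_ifs with h
  · exact tau1_le hε0 hε1 hs0 hs1
  · exact (tau2_facts hε0 hε1 hs0 hs1 (le_of_lt (not_le.mp h)) hr1).2.2

lemma id_tau (hε0 : 0 < ε) (hε1 : ε ≤ 1) (hs0 : 0 ≤ s) (hs1 : s ≤ 1)
    (hr0 : 0 ≤ r) (hr1 : r ≤ 1) :
    (1 - taufun ε s r) * qbar (Sigsc ε s r) + taufun ε s r * Sigsc ε s r = r := by
  rw [taufun]
  split_ifs with h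
  · exact id_tau_low hε0 hε1 hs0 hs1 hr0 h
  · exact id_tau_high hε0 hε1 hs0 hs1 (le_of_lt (not_le.mp h)) hr1

lemma tau_boundary (hε0 : 0 < ε) (hε1 : ε ≤ 1) (hs0 : 0 ≤ s) (hs1 : s ≤ 1)
    (hr : r = 1 - 2 * ε / 3) : tau1 ε s = tau2 ε s r := by
  subst hr
  set r := 1 - 2 * ε / 3 with hrdef
  have hr0 : 0 ≤ r := by rw [hrdef]; linarith
  have hr1 : r ≤ 1 := by rw [hrdef]; linarith
  have h13 := id_tau_low hε0 hε1 hs0 hs1 hr0 (le_refl r)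
  have h14 := id_tau_high hε0 hε1 hs0 hs1 (le_refl r) hr1
  have hsub : (tau1 ε s - tau2 ε s r) * (qbar (Sigsc ε s r) - Sigsc ε s r) = 0 := by
    linear_combination h14 - h13
  have hSg19 : 1 / 9 ≤ Sigsc ε s r := by
    have := Sigsc_ge_r3 hε0 hε1 hs0 hs1 hr0 hr1
    rw [hrdef] at this ⊢
    nlinarith
  have hSg34 : Sigsc ε s r ≤ 3 / 4 := Sigsc_le hε1 hs0 hs1 hr0 hr1
  have hpos : 0 < qbar (Sigsc ε s r) - Sigsc ε s r := by
    rw [qbar]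
    rcases le_total (3 * Sigsc ε s r) 1 with h | h
    · rw [min_eq_left h]; linarith
    · rw [min_eq_right h]; linarith
  rcases mul_eq_zero.mp hsub with h | h
  · linarith
  · linarith

lemma sigsc_one (hε0 : 0 < ε) : sigsc ε 1 = 3 / 4 := sigsc_hi hε0 (by linarith)

lemma tfun_one (hε0 : 0 < ε) : tfun ε 1 = 0 := by
  rw [tfun]
  norm_num
  linarith

lemma Sigsc_s_zero : Sigsc ε 0 r = r / 3 := by rw [Sigsc]; ring

lemma Sigsc_s_one : Sigsc ε 1 r = sigsc ε r := by rw [Sigsc]; ring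

lemma Sigsc_r_one (hε0 : 0 < ε) : Sigsc ε s 1 = (1 - s) / 3 + s * (3 / 4) := by
  rw [Sigsc, sigsc_one hε0]; ring

lemma taufun_s_zero (hε0 : 0 < ε) (hε1 : ε ≤ 1) (hr0 : 0 ≤ r) (hr1 : r ≤ 1) :
    taufun ε 0 r = 0 := by
  rw [taufun]
  split_ifs with h
  · rw [tau1]; simp
  · rw [tau2, Sigsc_s_zero]
    have : min (3 * (r / 3)) 1 = r := by
      rw [min_eq_left (by linarith)]; ring
    rw [this]
    simp

lemma taufun_s_one (hε0 : 0 < ε) (hε1 : ε ≤ 1) (hr0 : 0 ≤ r) (hr1 : r ≤ 1) :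
    taufun ε 1 r = tfun ε r := by
  rw [taufun]
  split_ifs with h
  · rw [tau1, tfun]
    rw [min_eq_left (by linarith : ε ≤ 4 * (1 - r))]
    field_simp
    ring
  · have hr : 1 - 2 * ε / 3 ≤ r := le_of_lt (not_le.mp h)
    have hb3 : 1 / 3 ≤ sigsc ε r := sigsc_ge_third hε0 hr
    have hb34 : sigsc ε r ≤ 3 / 4 := sigsc_le
    have hm : min (3 * Sigsc ε 1 r) 1 = 1 := by
      rw [Sigsc_s_one]
      exact min_eq_right (by linarith)
    have hmax : max ((1:ℝ) - Sigsc ε 1 r) (2 / 9) = 1 - sigsc ε r := by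
      rw [Sigsc_s_one]
      exact max_eq_left (by linarith)
    rw [tau2, hm, hmax]
    have hid := id_t hε0 hε1 hr0 hr1
    have hq1 : qbar (sigsc ε r) = 1 := by
      rw [qbar]; exact min_eq_right (by linarith)
    rw [hq1] at hid
    rw [div_eq_iff (by intro hz; rw [sub_eq_zero] at hz; linarith : (1:ℝ) - sigsc ε r ≠ 0)]
    nlinarith [hid]

lemma taufun_r_one (hε0 : 0 < ε) (hε1 : ε ≤ 1) (hs0 : 0 ≤ s) (hs1 : s ≤ 1) :
    taufun ε s 1 = 0 := by
  rw [taufun, if_neg (by intro h; nlinarith)]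
  have hSg : 3 * Sigsc ε s 1 ≥ 1 := by
    rw [Sigsc_r_one hε0]
    nlinarith
  rw [tau2]
  rw [min_eq_right (by linarith)]
  simp

lemma tfun_continuous : Continuous (tfun ε) := by
  unfold tfun; fun_prop

lemma sigsc_continuous : Continuous (sigsc ε) := by
  unfold sigsc; fun_prop

lemma Sigsc_continuous2 : Continuous (fun a : ℝ × ℝ => Sigsc ε a.1 a.2) := by
  unfold Sigsc sigsc; fun_prop

end SMF

namespace SMF

variable {n : ℕ}

local notation "Euc" => EuclideanSpace ℝ (Fin n)

/-- normalization valid away from `0`. -/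
def xhat (v : EuclideanSpace ℝ (Fin n)) : EuclideanSpace ℝ (Fin n) :=
  (max ‖v‖ (1/3))⁻¹ • v

def qmap (v : EuclideanSpace ℝ (Fin n)) : EuclideanSpace ℝ (Fin n) :=
  if ‖v‖ ≤ 1/3 then (3:ℝ) • v else xhat v

def qsmap (θ : ℝ) (v : EuclideanSpace ℝ (Fin n)) : EuclideanSpace ℝ (Fin n) :=
  (1-θ) • qmap v + θ • v

def sigvec (ε : ℝ) (v : EuclideanSpace ℝ (Fin n)) : EuclideanSpace ℝ (Fin n) :=
  if ‖v‖ ≤ 1 - 2*ε/3 then (3 - 2*ε)⁻¹ • v else sigsc ε ‖v‖ • xhat v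

def Sigvec (ε s : ℝ) (v : EuclideanSpace ℝ (Fin n)) : EuclideanSpace ℝ (Fin n) :=
  ((1-s)/3) • v + s • sigvec ε v

lemma xhat_continuous : Continuous (xhat (n := n)) := by
  unfold xhat
  refine Continuous.smul (f := fun v : EuclideanSpace ℝ (Fin n) => (max ‖v‖ (1/3))⁻¹) ?_ continuous_id
  apply Continuous.inv₀ (by fun_prop)
  intro v
  have : (0:ℝ) < max ‖v‖ (1/3) := lt_of_lt_of_le (by norm_num) (le_max_right _ _)
  exact ne_of_gt this

lemma qmap_continuous : Continuous (qmap (n := n)) := by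
  apply Continuous.if_le (by fun_prop) xhat_continuous (by fun_prop) continuous_const
  intro v hv
  rw [xhat, hv, max_self]
  norm_num

lemma qsmap_continuous : Continuous (fun a : ℝ × EuclideanSpace ℝ (Fin n) =>
    qsmap a.1 a.2) := by
  apply Continuous.add
  · exact Continuous.smul (continuous_const.sub continuous_fst) (qmap_continuous.comp continuous_snd)
  · fun_prop

lemma sigvec_continuous {ε : ℝ} (hε0 : 0 < ε) (hε1 : ε ≤ 1) :
    Continuous (sigvec (n := n) ε) := by
  have h3 := e3pos hε1
  have hsig : Continuous (fun v : EuclideanSpace ℝ (Fin n) => sigsc ε ‖v‖) := by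
    apply Continuous.min ?_ continuous_const
    apply Continuous.max
    · fun_prop
    · apply Continuous.div_const (by fun_prop)
  apply Continuous.if_le (by fun_prop) (hsig.smul xhat_continuous) (by fun_prop)
    continuous_const
  intro v hv
  have h13 : (1:ℝ)/3 ≤ ‖v‖ := by rw [hv]; linarith
  have h0 : ‖v‖ ≠ 0 := by intro h; rw [h] at h13; norm_num at h13
  show (3 - 2 * ε)⁻¹ • v = sigsc ε ‖v‖ • xhat v
  rw [sigsc_low hε0 hε1 (le_of_eq hv), xhat, max_eq_left h13, smul_smul]
  congr 1
  field_simp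

lemma xhat_norm_le (v : EuclideanSpace ℝ (Fin n)) : ‖xhat v‖ ≤ 1 := by
  rw [xhat, norm_smul, Real.norm_eq_abs]
  have h1 : (0:ℝ) < max ‖v‖ (1/3) := lt_of_lt_of_le (by norm_num) (le_max_right _ _)
  rw [abs_inv, abs_of_pos h1]
  rw [inv_mul_le_iff₀ h1, mul_one]
  exact le_max_left _ _

lemma xhat_of_ge (v : EuclideanSpace ℝ (Fin n)) (hv : 1/3 ≤ ‖v‖) :
    xhat v = ‖v‖⁻¹ • v := by
  rw [xhat, max_eq_left hv]

lemma xhat_norm_one (v : EuclideanSpace ℝ (Fin n)) (hv : 1/3 ≤ ‖v‖) : ‖xhat v‖ = 1 := by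
  have h0 : ‖v‖ ≠ 0 := by intro h; rw [h] at hv; norm_num at hv
  rw [xhat_of_ge v hv, norm_smul, Real.norm_eq_abs, abs_inv,
    abs_of_nonneg (norm_nonneg v), inv_mul_cancel₀ h0]

lemma qmap_norm_le (v : EuclideanSpace ℝ (Fin n)) : ‖qmap v‖ ≤ 1 := by
  rw [qmap]
  split_ifs with h
  · rw [norm_smul, Real.norm_eq_abs, abs_of_nonneg (by norm_num : (0:ℝ) ≤ 3)]; linarith
  · exact xhat_norm_le v

lemma qsmap_norm_le (v : EuclideanSpace ℝ (Fin n)) (θ : ℝ) (hθ0 : 0 ≤ θ) (hθ1 : θ ≤ 1)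
    (hv : ‖v‖ ≤ 1) : ‖qsmap θ v‖ ≤ 1 := by
  rw [qsmap]
  calc ‖(1-θ) • qmap v + θ • v‖ ≤ ‖(1-θ) • qmap v‖ + ‖θ • v‖ := norm_add_le _ _
  _ ≤ (1-θ) * 1 + θ * 1 := by
      rw [norm_smul, norm_smul, Real.norm_eq_abs, Real.norm_eq_abs,
        abs_of_nonneg (by linarith : (0:ℝ) ≤ 1 - θ), abs_of_nonneg hθ0]
      have := qmap_norm_le v
      exact add_le_add (mul_le_mul_of_nonneg_left this (by linarith))
        (mul_le_mul_of_nonneg_left hv hθ0)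
  _ = 1 := by ring

/-- The key cancellation lemma. -/
lemma qsmap_smul (v : EuclideanSpace ℝ (Fin n)) (k θ : ℝ) (hk : 0 ≤ k)
    (hid : (1-θ) * qbar (k * ‖v‖) + θ * (k * ‖v‖) = ‖v‖) :
    qsmap θ (k • v) = v := by
  by_cases hr : ‖v‖ = 0
  · have hv0 : v = 0 := norm_eq_zero.mp hr
    subst hv0
    rw [smul_zero, qsmap, qmap]
    simp [xhat]
  have hrpos : 0 < ‖v‖ := lt_of_le_of_ne (norm_nonneg v) (Ne.symm hr)
  have hnorm : ‖k • v‖ = k * ‖v‖ := by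
    rw [norm_smul, Real.norm_eq_abs, abs_of_nonneg hk]
  rw [qsmap, qmap]
  split_ifs with h
  · -- k‖v‖ ≤ 1/3
    rw [hnorm] at h
    have hqb : qbar (k * ‖v‖) = 3 * (k * ‖v‖) := min_eq_left (by linarith)
    rw [hqb] at hid
    have hco : ((1-θ) * 3 * k + θ * k) * ‖v‖ = 1 * ‖v‖ := by
      linear_combination hid
    have hco2 : (1-θ) * 3 * k + θ * k = 1 := mul_right_cancel₀ hr hco
    calc (1-θ) • (3:ℝ) • k • v + θ • k • v = (((1-θ) * 3 * k + θ * k)) • v := by module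
    _ = v := by rw [hco2, one_smul]
  · -- k‖v‖ > 1/3
    rw [hnorm] at h
    push_neg at h
    have hqb : qbar (k * ‖v‖) = 1 := min_eq_right (by linarith)
    rw [hqb] at hid
    have hkv : 1/3 ≤ ‖k • v‖ := by rw [hnorm]; linarith
    rw [xhat_of_ge _ hkv, hnorm]
    have hkv0 : k * ‖v‖ ≠ 0 := by
      intro hz; rw [hz] at h; norm_num at h
    have hco : ((1-θ) * ((k * ‖v‖)⁻¹ * k) + θ * k) * ‖v‖ = 1 * ‖v‖ := by
      have e1 : (k * ‖v‖)⁻¹ * (k * ‖v‖) = 1 := inv_mul_cancel₀ hkv0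
      linear_combination (1-θ) * e1 + hid
    have hco2 : (1-θ) * ((k * ‖v‖)⁻¹ * k) + θ * k = 1 := mul_right_cancel₀ hr hco
    calc (1-θ) • (k * ‖v‖)⁻¹ • k • v + θ • k • v
        = ((1-θ) * ((k * ‖v‖)⁻¹ * k) + θ * k) • v := by module
    _ = v := by rw [hco2, one_smul]

lemma sigvec_spec {ε : ℝ} (hε0 : 0 < ε) (hε1 : ε ≤ 1) (v : EuclideanSpace ℝ (Fin n))
    (hv : ‖v‖ ≤ 1) :
    ∃ k : ℝ, 0 ≤ k ∧ sigvec ε v = k • v ∧ k * ‖v‖ = sigsc ε ‖v‖ := by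
  have h3 := e3pos hε1
  rw [sigvec]
  split_ifs with h
  · exact ⟨(3 - 2*ε)⁻¹, by positivity, rfl, by
      rw [sigsc_low hε0 hε1 h]; rw [inv_mul_eq_div]⟩
  · push_neg at h
    have h13 : (1:ℝ)/3 ≤ ‖v‖ := by nlinarith
    have h0 : ‖v‖ ≠ 0 := by intro hz; rw [hz] at h13; norm_num at h13
    refine ⟨sigsc ε ‖v‖ * ‖v‖⁻¹, ?_, ?_, ?_⟩
    · have := sigsc_nonneg (ε := ε) hε1 (norm_nonneg v)
      positivity
    · rw [xhat_of_ge v h13, smul_smul]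
    · rw [mul_assoc, inv_mul_cancel₀ h0, mul_one]

lemma sigvec_norm {ε : ℝ} (hε0 : 0 < ε) (hε1 : ε ≤ 1) (v : EuclideanSpace ℝ (Fin n))
    (hv : ‖v‖ ≤ 1) : ‖sigvec ε v‖ = sigsc ε ‖v‖ := by
  obtain ⟨k, hk0, hkv, hkn⟩ := sigvec_spec hε0 hε1 v hv
  rw [hkv, norm_smul, Real.norm_eq_abs, abs_of_nonneg hk0, hkn]

lemma Sigvec_spec {ε s : ℝ} (hε0 : 0 < ε) (hε1 : ε ≤ 1) (hs0 : 0 ≤ s) (hs1 : s ≤ 1)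
    (v : EuclideanSpace ℝ (Fin n)) (hv : ‖v‖ ≤ 1) :
    ∃ k : ℝ, 0 ≤ k ∧ Sigvec ε s v = k • v ∧ k * ‖v‖ = Sigsc ε s ‖v‖ := by
  obtain ⟨k, hk0, hkv, hkn⟩ := sigvec_spec hε0 hε1 v hv
  refine ⟨(1-s)/3 + s * k, by nlinarith [mul_nonneg hs0 hk0], ?_, ?_⟩
  · rw [Sigvec, hkv]; module
  · rw [Sigsc, add_mul, ← hkn]; ring

lemma Sigvec_norm {ε s : ℝ} (hε0 : 0 < ε) (hε1 : ε ≤ 1) (hs0 : 0 ≤ s) (hs1 : s ≤ 1)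
    (v : EuclideanSpace ℝ (Fin n)) (hv : ‖v‖ ≤ 1) :
    ‖Sigvec ε s v‖ = Sigsc ε s ‖v‖ := by
  obtain ⟨k, hk0, hkv, hkn⟩ := Sigvec_spec hε0 hε1 hs0 hs1 v hv
  rw [hkv, norm_smul, Real.norm_eq_abs, abs_of_nonneg hk0, hkn]

/-- Main geometric identity for `H_cell`. -/
lemma qs_tfun {ε : ℝ} (hε0 : 0 < ε) (hε1 : ε ≤ 1) (v : EuclideanSpace ℝ (Fin n))
    (hv : ‖v‖ ≤ 1) : qsmap (tfun ε ‖v‖) (sigvec ε v) = v := by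
  obtain ⟨k, hk0, hkv, hkn⟩ := sigvec_spec hε0 hε1 v hv
  rw [hkv]
  exact qsmap_smul v k _ hk0 (by rw [hkn]; exact id_t hε0 hε1 (norm_nonneg v) hv)

/-- Main geometric identity for `Ψ_cell`. -/
lemma qs_tau {ε s : ℝ} (hε0 : 0 < ε) (hε1 : ε ≤ 1) (hs0 : 0 ≤ s) (hs1 : s ≤ 1)
    (v : EuclideanSpace ℝ (Fin n)) (hv : ‖v‖ ≤ 1) :
    qsmap (taufun ε s ‖v‖) (Sigvec ε s v) = v := by
  obtain ⟨k, hk0, hkv, hkn⟩ := Sigvec_spec hε0 hε1 hs0 hs1 v hv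
  rw [hkv]
  exact qsmap_smul v k _ hk0
    (by rw [hkn]; exact id_tau hε0 hε1 hs0 hs1 (norm_nonneg v) hv)

end SMF
namespace SMF

variable {n : ℕ}

lemma qsmap_zero (v : EuclideanSpace ℝ (Fin n)) : qsmap 0 v = qmap v := by
  rw [qsmap]; simp

lemma qmap_of_ge (v : EuclideanSpace ℝ (Fin n)) (hv : 1/3 ≤ ‖v‖) :
    qmap v = xhat v := by
  rw [qmap]
  split_ifs with h
  · have he : ‖v‖ = 1/3 := le_antisymm h hv
    rw [xhat, he, max_self]
    norm_num
  · rfl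

lemma norm_smul_unit (v : EuclideanSpace ℝ (Fin n)) (hv : ‖v‖ = 1) {c : ℝ} (hc : 0 ≤ c) :
    ‖c • v‖ = c := by
  rw [norm_smul, Real.norm_eq_abs, abs_of_nonneg hc, hv, mul_one]

lemma xhat_smul_unit (v : EuclideanSpace ℝ (Fin n)) (hv : ‖v‖ = 1) {c : ℝ}
    (hc : 1/3 ≤ c) : xhat (c • v) = v := by
  have hc0 : (0:ℝ) < c := by linarith
  have hn : ‖c • v‖ = c := norm_smul_unit v hv hc0.le
  rw [xhat, hn, max_eq_left hc, smul_smul, inv_mul_cancel₀ (ne_of_gt hc0), one_smul]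

lemma sigvec_r_one {ε : ℝ} (hε0 : 0 < ε) (hε1 : ε ≤ 1) (v : EuclideanSpace ℝ (Fin n))
    (hv : ‖v‖ = 1) : sigvec ε v = (3/4 : ℝ) • v := by
  rw [sigvec, if_neg (by rw [hv]; intro h; nlinarith), hv, sigsc_one hε0,
    xhat_of_ge v (by rw [hv]; norm_num), hv]
  norm_num

lemma Sigvec_s_zero {ε : ℝ} (v : EuclideanSpace ℝ (Fin n)) :
    Sigvec ε 0 v = (3⁻¹ : ℝ) • v := by
  rw [Sigvec]
  norm_num

lemma Sigvec_s_one {ε : ℝ} (v : EuclideanSpace ℝ (Fin n)) :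
    Sigvec ε 1 v = sigvec ε v := by
  rw [Sigvec]
  norm_num

lemma Sigvec_r_one {ε s : ℝ} (hε0 : 0 < ε) (hε1 : ε ≤ 1) (v : EuclideanSpace ℝ (Fin n))
    (hv : ‖v‖ = 1) : Sigvec ε s v = ((1-s)/3 + s * (3/4) : ℝ) • v := by
  rw [Sigvec, sigvec_r_one hε0 hε1 v hv]
  module

lemma Sigvec_continuous {ε : ℝ} (hε0 : 0 < ε) (hε1 : ε ≤ 1) :
    Continuous (fun a : ℝ × EuclideanSpace ℝ (Fin n) => Sigvec ε a.1 a.2) := by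
  apply Continuous.add
  · exact Continuous.smul ((continuous_const.sub continuous_fst).div_const 3) continuous_snd
  · exact Continuous.smul continuous_fst ((sigvec_continuous hε0 hε1).comp continuous_snd)

/-- The projection onto the unit interval. -/
def prj : ℝ → unitInterval := Set.projIcc 0 1 zero_le_one

lemma prj_continuous : Continuous prj := continuous_projIcc

lemma prj_coe {t : ℝ} (ht0 : 0 ≤ t) (ht1 : t ≤ 1) : ((prj t : unitInterval) : ℝ) = t := by
  rw [prj, Set.projIcc_of_mem zero_le_one ⟨ht0, ht1⟩]

lemma prj_zero : prj 0 = 0 := by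
  apply Subtype.ext
  rw [prj_coe le_rfl zero_le_one]
  rfl

lemma prj_one_of_ge {t : ℝ} (ht : 1 ≤ t) : prj t = 1 := by
  apply Subtype.ext
  rw [prj, Set.projIcc_of_right_le zero_le_one ht]
  rfl

lemma cm_congr {α β γ : Type*} [TopologicalSpace α] [TopologicalSpace β]
    [TopologicalSpace γ] (f : C(α × β, γ)) {a a' : α} {b b' : β}
    (ha : a = a') (hb : b = b') : f (a, b) = f (a', b') := by rw [ha, hb]

end SMF
namespace SMF

set_option maxHeartbeats 2000000 in
theorem cell_step {E B Y : Type*} [TopologicalSpace E] [TopologicalSpace B]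
    [TopologicalSpace Y]
    (p : E → B) (hp : IsSerreMicrofibration p)
    (F : C(Y, B)) (G : C(Y, E)) (hG : ∀ y, p (G y) = F y)
    {A Bs : Set Y} {n : ℕ} (att : IsCellAttachment A Bs n)
    (hA : C(↥A, E)) (ψ : C(unitInterval × ↥A, E))
    (h1 : ∀ a, p (hA a) = F ↑a)
    (h2 : ∀ a, ψ (0, a) = G ↑a)
    (h3 : ∀ a, ψ (1, a) = hA a)
    (h4 : ∀ t a, p (ψ (t, a)) = F ↑a) :
    ∃ (hB : C(↥Bs, E)) (ψB : C(unitInterval × ↥Bs, E)),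
      (∀ b, p (hB b) = F ↑b) ∧ (∀ b, ψB (0, b) = G ↑b) ∧ (∀ b, ψB (1, b) = hB b) ∧
      (∀ t b, p (ψB (t, b)) = F ↑b) ∧
      (∀ (y : Y) (ha : y ∈ A) (hb : y ∈ Bs), hB ⟨y, hb⟩ = hA ⟨y, ha⟩) := by
  classical
  obtain ⟨hpcont, hplift⟩ := hp
  obtain ⟨hAB, Φ, hΦc, hBeq, hSph, hInj, hBall, hWeak⟩ := att
  have hxnorm : ∀ x : Disk n, ‖(x : EuclideanSpace ℝ (Fin n))‖ ≤ 1 := fun x =>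
    mem_closedBall_zero_iff.mp x.2
  have ΦA : ∀ v : EuclideanSpace ℝ (Fin n), ‖v‖ = 1 → Φ v ∈ A := fun v hv =>
    hSph ⟨v, mem_sphere_zero_iff_norm.mpr hv, rfl⟩
  have sphere_of_memA : ∀ x : Disk n, Φ ↑x ∈ A → ‖(x : EuclideanSpace ℝ (Fin n))‖ = 1 := by
    intro x hx
    by_contra h
    have hball : (x : EuclideanSpace ℝ (Fin n)) ∈ Metric.ball 0 1 :=
      mem_ball_zero_iff.mpr (lt_of_le_of_ne (hxnorm x) h)
    have himg : Φ ↑x ∈ Φ '' Metric.ball 0 1 := Set.mem_image_of_mem Φ hball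
    rw [hBall] at himg
    exact himg.2 hx
  -- the two closed pieces of the disc
  have hs1 : IsClosed {x : Disk n | ‖(x : EuclideanSpace ℝ (Fin n))‖ ≤ 1/3} :=
    isClosed_le (by fun_prop) continuous_const
  have hs2 : IsClosed {x : Disk n | 1/3 ≤ ‖(x : EuclideanSpace ℝ (Fin n))‖} :=
    isClosed_le continuous_const (by fun_prop)
  have hcov : ∀ x : Disk n, x ∈ {x : Disk n | ‖(x : EuclideanSpace ℝ (Fin n))‖ ≤ 1/3} ∪
      {x : Disk n | 1/3 ≤ ‖(x : EuclideanSpace ℝ (Fin n))‖} := fun x => by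
    rcases le_total ‖(x : EuclideanSpace ℝ (Fin n))‖ (1/3) with h | h
    · exact Or.inl h
    · exact Or.inr h
  -- initial data ĝ
  have hg1mem : ∀ z : ↥{x : Disk n | ‖(x : EuclideanSpace ℝ (Fin n))‖ ≤ 1/3},
      (3:ℝ) • ((z : Disk n) : EuclideanSpace ℝ (Fin n))
      ∈ Metric.closedBall (0 : EuclideanSpace ℝ (Fin n)) 1 := by
    intro z
    rw [mem_closedBall_zero_iff, norm_smul, Real.norm_eq_abs,
      abs_of_nonneg (by norm_num : (0:ℝ) ≤ 3)]
    have h13 : ‖((z : Disk n) : EuclideanSpace ℝ (Fin n))‖ ≤ 1/3 := z.2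
    linarith
  set g1 : C(↥{x : Disk n | ‖(x : EuclideanSpace ℝ (Fin n))‖ ≤ 1/3}, E) :=
    ⟨fun z => G (Φ ((3:ℝ) • ((z : Disk n) : EuclideanSpace ℝ (Fin n)))),
      G.continuous.comp (hΦc.comp_continuous (by fun_prop) hg1mem)⟩ with hg1def
  have hg2sph : ∀ z : ↥{x : Disk n | 1/3 ≤ ‖(x : EuclideanSpace ℝ (Fin n))‖},
      Φ (xhat ((z : Disk n) : EuclideanSpace ℝ (Fin n))) ∈ A := by
    intro z
    exact ΦA _ (xhat_norm_one _ z.2)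
  set g2 : C(↥{x : Disk n | 1/3 ≤ ‖(x : EuclideanSpace ℝ (Fin n))‖}, E) :=
    ⟨fun z => ψ (prj (3 * ‖((z : Disk n) : EuclideanSpace ℝ (Fin n))‖ - 1),
        ⟨Φ (xhat ((z : Disk n) : EuclideanSpace ℝ (Fin n))), hg2sph z⟩),
      ψ.continuous.comp ((prj_continuous.comp (by fun_prop)).prodMk
        (Continuous.subtype_mk (hΦc.comp_continuous
          (xhat_continuous.comp (by fun_prop))
          (fun z => mem_closedBall_zero_iff.mpr (xhat_norm_le _))) _))⟩ with hg2def
  have hcompat12 : ∀ (x : Disk n)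
      (hx1 : x ∈ {x : Disk n | ‖(x : EuclideanSpace ℝ (Fin n))‖ ≤ 1/3})
      (hx2 : x ∈ {x : Disk n | 1/3 ≤ ‖(x : EuclideanSpace ℝ (Fin n))‖}),
      g1 ⟨x, hx1⟩ = g2 ⟨x, hx2⟩ := by
    intro x hx1 hx2
    have he : ‖(x : EuclideanSpace ℝ (Fin n))‖ = 1/3 := le_antisymm hx1 hx2
    have hxx : xhat (x : EuclideanSpace ℝ (Fin n)) =
        (3:ℝ) • (x : EuclideanSpace ℝ (Fin n)) := by
      rw [xhat, he, max_self]
      norm_num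
    show G (Φ ((3:ℝ) • (x : EuclideanSpace ℝ (Fin n)))) =
      ψ (prj (3 * ‖(x : EuclideanSpace ℝ (Fin n))‖ - 1),
        ⟨Φ (xhat (x : EuclideanSpace ℝ (Fin n))), hg2sph ⟨x, hx2⟩⟩)
    have ha : prj (3 * ‖(x : EuclideanSpace ℝ (Fin n))‖ - 1) = 0 := by
      rw [show (3:ℝ) * ‖(x : EuclideanSpace ℝ (Fin n))‖ - 1 = 0 from by rw [he]; ring]
      exact prj_zero
    rw [ha, h2]
    show G (Φ ((3:ℝ) • (x : EuclideanSpace ℝ (Fin n)))) =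
      G (Φ (xhat (x : EuclideanSpace ℝ (Fin n))))
    rw [hxx]
  obtain ⟨ghat, e_g1, e_g2⟩ := paste_exists hs1 hs2 hcov g1 g2 hcompat12
  -- the homotopy ĥ to be lifted
  have hqsmem : ∀ a : unitInterval × Disk n,
      qsmap (↑a.1) ((a.2 : EuclideanSpace ℝ (Fin n)))
        ∈ Metric.closedBall (0 : EuclideanSpace ℝ (Fin n)) 1 := by
    intro a
    rw [mem_closedBall_zero_iff]
    exact qsmap_norm_le _ _ a.1.2.1 a.1.2.2 (hxnorm a.2)
  have hqsc : Continuous (fun a : unitInterval × Disk n =>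
      qsmap (↑a.1) ((a.2 : EuclideanSpace ℝ (Fin n)))) := by
    have heq : (fun a : unitInterval × Disk n =>
        qsmap (↑a.1) ((a.2 : EuclideanSpace ℝ (Fin n)))) =
        (fun q : ℝ × EuclideanSpace ℝ (Fin n) => qsmap q.1 q.2) ∘
          (fun a : unitInterval × Disk n =>
            ((↑a.1 : ℝ), (a.2 : EuclideanSpace ℝ (Fin n)))) := rfl
    rw [heq]
    exact qsmap_continuous.comp (by fun_prop)
  set hhat : C(unitInterval × Disk n, B) :=
    ⟨fun a => F (Φ (qsmap (↑a.1) ((a.2 : EuclideanSpace ℝ (Fin n))))),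
      F.continuous.comp (hΦc.comp_continuous hqsc hqsmem)⟩ with hhatdef
  have hcomp0 : ∀ x : Disk n, hhat (0, x) = p (ghat x) := by
    intro x
    show F (Φ (qsmap ((0 : unitInterval) : ℝ) ((x : EuclideanSpace ℝ (Fin n))))) =
      p (ghat x)
    rw [show ((0 : unitInterval) : ℝ) = 0 from rfl, qsmap_zero]
    rcases le_total ‖(x : EuclideanSpace ℝ (Fin n))‖ (1/3) with h | h
    · rw [e_g1 x h]
      show _ = p (G (Φ ((3:ℝ) • (x : EuclideanSpace ℝ (Fin n)))))
      rw [hG, qmap, if_pos h]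
    · rw [e_g2 x h]
      show _ = p (ψ (prj (3 * ‖(x : EuclideanSpace ℝ (Fin n))‖ - 1),
        ⟨Φ (xhat (x : EuclideanSpace ℝ (Fin n))), hg2sph ⟨x, h⟩⟩))
      rw [h4, qmap_of_ge _ h]
  obtain ⟨ε₀, hε₀pos, Λ, hΛ0, hΛ⟩ := hplift n ghat hhat hcomp0
  set ε : ℝ := min ε₀ 1 with hεdef
  have hε0 : 0 < ε := lt_min hε₀pos one_pos
  have hε1 : ε ≤ 1 := min_le_right _ _
  have hεε₀ : ε ≤ ε₀ := min_le_left _ _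
  -- the cell lift H_cell and cell homotopy Ψ_cell
  have sgmem : ∀ x : Disk n, sigvec ε (x : EuclideanSpace ℝ (Fin n))
      ∈ Metric.closedBall (0 : EuclideanSpace ℝ (Fin n)) 1 := by
    intro x
    rw [mem_closedBall_zero_iff, sigvec_norm hε0 hε1 _ (hxnorm x)]
    exact sigsc_le_one
  have Sgmem : ∀ (s : unitInterval) (x : Disk n),
      Sigvec ε (↑s) (x : EuclideanSpace ℝ (Fin n))
      ∈ Metric.closedBall (0 : EuclideanSpace ℝ (Fin n)) 1 := by
    intro s x
    rw [mem_closedBall_zero_iff, Sigvec_norm hε0 hε1 s.2.1 s.2.2 _ (hxnorm x)]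
    exact le_trans (Sigsc_le hε1 s.2.1 s.2.2 (norm_nonneg _) (hxnorm x)) (by norm_num)
  set Hcell : C(Disk n, E) :=
    ⟨fun x => Λ (prj (tfun ε ‖(x : EuclideanSpace ℝ (Fin n))‖),
        ⟨sigvec ε (x : EuclideanSpace ℝ (Fin n)), sgmem x⟩),
      Λ.continuous.comp ((Continuous.prodMk
        (prj_continuous.comp (tfun_continuous.comp (by fun_prop)))
        (Continuous.subtype_mk
          ((sigvec_continuous hε0 hε1).comp continuous_subtype_val) _)))⟩ with hHcelldef
  -- continuity of the taufun composite
  have tauc : Continuous (fun a : unitInterval × Disk n =>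
      taufun ε (↑a.1) ‖((a.2 : EuclideanSpace ℝ (Fin n)))‖) := by
    show Continuous (fun a : unitInterval × Disk n =>
      if ‖((a.2 : EuclideanSpace ℝ (Fin n)))‖ ≤ 1 - 2*ε/3
        then tau1 ε (↑a.1) else tau2 ε (↑a.1) ‖((a.2 : EuclideanSpace ℝ (Fin n)))‖)
    have hSgc : Continuous (fun a : unitInterval × Disk n =>
        Sigsc ε (↑a.1) ‖((a.2 : EuclideanSpace ℝ (Fin n)))‖) := by
      have heq : (fun a : unitInterval × Disk n =>
          Sigsc ε (↑a.1) ‖((a.2 : EuclideanSpace ℝ (Fin n)))‖) =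
          (fun q : ℝ × ℝ => Sigsc ε q.1 q.2) ∘
            (fun a : unitInterval × Disk n =>
              ((↑a.1 : ℝ), ‖(a.2 : EuclideanSpace ℝ (Fin n))‖)) := rfl
      rw [heq]
      exact Sigsc_continuous2.comp (by fun_prop)
    apply Continuous.if_le
    · show Continuous (fun a : unitInterval × Disk n =>
        (↑a.1 * ε) / ((3 - 2*ε) * (1 - ↑a.1) / 3 + ↑a.1))
      apply Continuous.div (by fun_prop) (by fun_prop)
      intro a
      have := tau1_denom_pos (ε := ε) hε1 a.1.2.1 a.1.2.2
      linarith
    · show Continuous (fun a : unitInterval × Disk n =>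
        (min (3 * Sigsc ε (↑a.1) ‖((a.2 : EuclideanSpace ℝ (Fin n)))‖) 1
            - ‖((a.2 : EuclideanSpace ℝ (Fin n)))‖) /
          (max (min (3 * Sigsc ε (↑a.1) ‖((a.2 : EuclideanSpace ℝ (Fin n)))‖) 1
            - Sigsc ε (↑a.1) ‖((a.2 : EuclideanSpace ℝ (Fin n)))‖) (2/9)))
      apply Continuous.div
      · apply Continuous.sub (Continuous.min (by fun_prop) continuous_const) (by fun_prop)
      · exact Continuous.max
          (Continuous.sub (Continuous.min (by fun_prop) continuous_const) hSgc)
          continuous_const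
      · intro a
        have h29 : (2:ℝ)/9 ≤ max (min (3 * Sigsc ε (↑a.1)
            ‖((a.2 : EuclideanSpace ℝ (Fin n)))‖) 1
            - Sigsc ε (↑a.1) ‖((a.2 : EuclideanSpace ℝ (Fin n)))‖) (2/9) :=
          le_max_right _ _
        linarith
    · fun_prop
    · exact continuous_const
    · intro a ha
      exact tau_boundary hε0 hε1 a.1.2.1 a.1.2.2 ha
  have hSigvc : Continuous (fun a : unitInterval × Disk n =>
      Sigvec ε (↑a.1) ((a.2 : EuclideanSpace ℝ (Fin n)))) := by
    have heq : (fun a : unitInterval × Disk n =>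
        Sigvec ε (↑a.1) ((a.2 : EuclideanSpace ℝ (Fin n)))) =
        (fun q : ℝ × EuclideanSpace ℝ (Fin n) => Sigvec ε q.1 q.2) ∘
          (fun a : unitInterval × Disk n =>
            ((↑a.1 : ℝ), (a.2 : EuclideanSpace ℝ (Fin n)))) := rfl
    rw [heq]
    exact (Sigvec_continuous hε0 hε1).comp (by fun_prop)
  set Ψcell : C(unitInterval × Disk n, E) :=
    ⟨fun a => Λ (prj (taufun ε (↑a.1) ‖((a.2 : EuclideanSpace ℝ (Fin n)))‖),
        ⟨Sigvec ε (↑a.1) ((a.2 : EuclideanSpace ℝ (Fin n))), Sgmem a.1 a.2⟩),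
      Λ.continuous.comp ((prj_continuous.comp tauc).prodMk
        (Continuous.subtype_mk hSigvc _))⟩ with hΨcelldef
  have Hcell_eval : ∀ x : Disk n, Hcell x =
      Λ (prj (tfun ε ‖(x : EuclideanSpace ℝ (Fin n))‖),
        ⟨sigvec ε (x : EuclideanSpace ℝ (Fin n)), sgmem x⟩) := fun x => rfl
  have Ψcell_eval : ∀ (s : unitInterval) (x : Disk n), Ψcell (s, x) =
      Λ (prj (taufun ε (↑s) ‖(x : EuclideanSpace ℝ (Fin n))‖),
        ⟨Sigvec ε (↑s) (x : EuclideanSpace ℝ (Fin n)), Sgmem s x⟩) := fun s x => rfl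
  -- H_cell is a lift of F ∘ Φ
  have e_pH : ∀ x : Disk n, p (Hcell x) = F (Φ (x : EuclideanSpace ℝ (Fin n))) := by
    intro x
    have ht0 := tfun_nonneg hε0 (hxnorm x)
    have ht1 : tfun ε ‖(x : EuclideanSpace ℝ (Fin n))‖ ≤ 1 := tfun_le_one hε1
    have hcoe : ((prj (tfun ε ‖(x : EuclideanSpace ℝ (Fin n))‖)) : ℝ) =
        tfun ε ‖(x : EuclideanSpace ℝ (Fin n))‖ := prj_coe ht0 ht1
    have hle : ((prj (tfun ε ‖(x : EuclideanSpace ℝ (Fin n))‖)) : ℝ) ≤ ε₀ := by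
      rw [hcoe]; exact le_trans tfun_le hεε₀
    rw [Hcell_eval x, hΛ _ _ hle]
    show F (Φ (qsmap (↑(prj (tfun ε ‖(x : EuclideanSpace ℝ (Fin n))‖)))
      (sigvec ε (x : EuclideanSpace ℝ (Fin n))))) = _
    rw [hcoe, qs_tfun hε0 hε1 _ (hxnorm x)]
  -- H_cell restricted to the sphere
  have e_H_sphere : ∀ (x : Disk n) (hx : ‖(x : EuclideanSpace ℝ (Fin n))‖ = 1)
      (hxA : Φ ↑x ∈ A), Hcell x = hA ⟨Φ ↑x, hxA⟩ := by
    intro x hx hxA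
    have hprj : prj (tfun ε ‖(x : EuclideanSpace ℝ (Fin n))‖) = 0 := by
      rw [hx, tfun_one hε0]; exact prj_zero
    have hsv : sigvec ε (x : EuclideanSpace ℝ (Fin n)) =
        (3/4 : ℝ) • (x : EuclideanSpace ℝ (Fin n)) := sigvec_r_one hε0 hε1 _ hx
    have hnc : ‖sigvec ε (x : EuclideanSpace ℝ (Fin n))‖ = 3/4 := by
      rw [hsv]; exact norm_smul_unit _ hx (by norm_num)
    have hmem2 : (1:ℝ)/3 ≤ ‖sigvec ε (x : EuclideanSpace ℝ (Fin n))‖ := by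
      rw [hnc]; norm_num
    rw [Hcell_eval x, hprj, hΛ0,
      e_g2 (⟨sigvec ε (x : EuclideanSpace ℝ (Fin n)), sgmem x⟩ : Disk n) hmem2]
    have ha1 : prj (3 * ‖sigvec ε (x : EuclideanSpace ℝ (Fin n))‖ - 1) = 1 := by
      rw [hnc]; exact prj_one_of_ge (by norm_num)
    have hb1 : Φ (xhat (sigvec ε (x : EuclideanSpace ℝ (Fin n)))) = Φ ↑x := by
      rw [hsv, xhat_smul_unit _ hx (by norm_num)]
    calc g2 ⟨⟨sigvec ε (x : EuclideanSpace ℝ (Fin n)), sgmem x⟩, hmem2⟩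
        = ψ (1, ⟨Φ ↑x, hxA⟩) := cm_congr ψ ha1 (Subtype.ext hb1)
    _ = hA ⟨Φ ↑x, hxA⟩ := h3 _
  -- Ψ_cell at time 0
  have e_Ψ0 : ∀ x : Disk n, Ψcell (0, x) = G (Φ ↑x) := by
    intro x
    have hτ : taufun ε (((0:unitInterval)) : ℝ) ‖(x : EuclideanSpace ℝ (Fin n))‖ = 0 :=
      taufun_s_zero hε0 hε1 (norm_nonneg _) (hxnorm x)
    have hprj : prj (taufun ε (((0:unitInterval)) : ℝ)
        ‖(x : EuclideanSpace ℝ (Fin n))‖) = 0 := by rw [hτ]; exact prj_zero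
    have hSv : Sigvec ε (((0:unitInterval)) : ℝ) (x : EuclideanSpace ℝ (Fin n)) =
        (3⁻¹ : ℝ) • (x : EuclideanSpace ℝ (Fin n)) := Sigvec_s_zero _
    have hmem1 : ‖Sigvec ε (((0:unitInterval)) : ℝ)
        (x : EuclideanSpace ℝ (Fin n))‖ ≤ 1/3 := by
      rw [hSv, norm_smul, Real.norm_eq_abs, abs_of_nonneg (by norm_num : (0:ℝ) ≤ 3⁻¹)]
      have := hxnorm x
      nlinarith
    rw [Ψcell_eval 0 x, hprj, hΛ0,
      e_g1 (⟨Sigvec ε (((0:unitInterval)) : ℝ) (x : EuclideanSpace ℝ (Fin n)),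
        Sgmem 0 x⟩ : Disk n) hmem1]
    calc g1 ⟨⟨Sigvec ε (((0:unitInterval)) : ℝ) (x : EuclideanSpace ℝ (Fin n)),
          Sgmem 0 x⟩, hmem1⟩
        = G (Φ ((3:ℝ) • Sigvec ε (((0:unitInterval)) : ℝ)
            (x : EuclideanSpace ℝ (Fin n)))) := rfl
    _ = G (Φ ↑x) := by rw [hSv, smul_smul]; norm_num
  -- Ψ_cell at time 1
  have e_Ψ1 : ∀ x : Disk n, Ψcell (1, x) = Hcell x := by
    intro x
    rw [Ψcell_eval 1 x, Hcell_eval x]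
    have c1 : prj (taufun ε (((1:unitInterval)) : ℝ) ‖(x : EuclideanSpace ℝ (Fin n))‖)
        = prj (tfun ε ‖(x : EuclideanSpace ℝ (Fin n))‖) := by
      rw [show (((1:unitInterval)) : ℝ) = 1 from rfl,
        taufun_s_one hε0 hε1 (norm_nonneg _) (hxnorm x)]
    have c2 : Sigvec ε (((1:unitInterval)) : ℝ) (x : EuclideanSpace ℝ (Fin n)) =
        sigvec ε (x : EuclideanSpace ℝ (Fin n)) := Sigvec_s_one _
    exact cm_congr Λ c1 (Subtype.ext c2)
  -- Ψ_cell is fibrewise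
  have e_pΨ : ∀ (s : unitInterval) (x : Disk n),
      p (Ψcell (s, x)) = F (Φ (x : EuclideanSpace ℝ (Fin n))) := by
    intro s x
    have ht0 := taufun_nonneg hε0 hε1 s.2.1 s.2.2 (norm_nonneg _) (hxnorm x)
    have htε := taufun_le hε0 hε1 s.2.1 s.2.2 (norm_nonneg _) (hxnorm x)
    have hcoe : ((prj (taufun ε (↑s) ‖(x : EuclideanSpace ℝ (Fin n))‖)) : ℝ) =
        taufun ε (↑s) ‖(x : EuclideanSpace ℝ (Fin n))‖ :=
      prj_coe ht0 (le_trans htε hε1)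
    have hle : ((prj (taufun ε (↑s) ‖(x : EuclideanSpace ℝ (Fin n))‖)) : ℝ) ≤ ε₀ := by
      rw [hcoe]; exact le_trans htε hεε₀
    rw [Ψcell_eval s x, hΛ _ _ hle]
    show F (Φ (qsmap (↑(prj (taufun ε (↑s) ‖(x : EuclideanSpace ℝ (Fin n))‖)))
      (Sigvec ε (↑s) (x : EuclideanSpace ℝ (Fin n))))) = _
    rw [hcoe, qs_tau hε0 hε1 s.2.1 s.2.2 _ (hxnorm x)]
  -- Ψ_cell on the sphere is the reparametrized ψ
  have e_Ψsphere : ∀ (s : unitInterval) (x : Disk n)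
      (hx : ‖(x : EuclideanSpace ℝ (Fin n))‖ = 1) (hxA : Φ ↑x ∈ A),
      Ψcell (s, x) = ψ (prj (5 * ↑s / 4), ⟨Φ ↑x, hxA⟩) := by
    intro s x hx hxA
    have hprj : prj (taufun ε (↑s) ‖(x : EuclideanSpace ℝ (Fin n))‖) = 0 := by
      rw [hx, taufun_r_one hε0 hε1 s.2.1 s.2.2]; exact prj_zero
    have hSv : Sigvec ε (↑s) (x : EuclideanSpace ℝ (Fin n)) =
        ((1 - ↑s)/3 + ↑s * (3/4) : ℝ) • (x : EuclideanSpace ℝ (Fin n)) :=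
      Sigvec_r_one hε0 hε1 _ hx
    have hc0 : (0:ℝ) ≤ (1 - ↑s)/3 + ↑s * (3/4) := by
      have := s.2.1; have := s.2.2; nlinarith
    have hnc : ‖Sigvec ε (↑s) (x : EuclideanSpace ℝ (Fin n))‖ =
        (1 - ↑s)/3 + ↑s * (3/4) := by
      rw [hSv]; exact norm_smul_unit _ hx hc0
    have hc13 : (1:ℝ)/3 ≤ (1 - ↑s)/3 + ↑s * (3/4) := by
      have := s.2.1; nlinarith
    have hmem2 : (1:ℝ)/3 ≤ ‖Sigvec ε (↑s) (x : EuclideanSpace ℝ (Fin n))‖ := by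
      rw [hnc]; exact hc13
    rw [Ψcell_eval s x, hprj, hΛ0,
      e_g2 (⟨Sigvec ε (↑s) (x : EuclideanSpace ℝ (Fin n)), Sgmem s x⟩ : Disk n) hmem2]
    have ha1 : prj (3 * ‖Sigvec ε (↑s) (x : EuclideanSpace ℝ (Fin n))‖ - 1) =
        prj (5 * ↑s / 4) := by
      rw [hnc]; congr 1; ring
    have hb1 : Φ (xhat (Sigvec ε (↑s) (x : EuclideanSpace ℝ (Fin n)))) = Φ ↑x := by
      rw [hSv, xhat_smul_unit _ hx hc13]
    exact cm_congr ψ ha1 (Subtype.ext hb1)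
  -- glue H over B
  have compatH : ∀ (x : Disk n) (hx : Φ ↑x ∈ A), Hcell x = hA ⟨Φ ↑x, hx⟩ := fun x hx =>
    e_H_sphere x (sphere_of_memA x hx) hx
  obtain ⟨hB, eB1, eB2⟩ := attach_glue hSph hInj hBall hWeak hAB hA Hcell compatH
  -- glue the homotopies (curried)
  set r5 : C(unitInterval, unitInterval) :=
    ⟨fun s => prj (5 * ↑s / 4), prj_continuous.comp (by fun_prop)⟩ with hr5def
  set ψA' : C(↥A × unitInterval, E) :=
    ⟨fun a => ψ (r5 a.2, a.1),
      ψ.continuous.comp ((r5.continuous.comp continuous_snd).prodMk continuous_fst)⟩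
    with hψA'def
  set ΨD' : C(Disk n × unitInterval, E) :=
    ⟨fun a => Ψcell (a.2, a.1),
      Ψcell.continuous.comp (continuous_snd.prodMk continuous_fst)⟩ with hΨD'def
  have κcompat : ∀ (x : Disk n) (hx : Φ ↑x ∈ A),
      ΨD'.curry x = ψA'.curry ⟨Φ ↑x, hx⟩ := by
    intro x hx
    ext s
    show Ψcell (s, x) = ψ (r5 s, ⟨Φ ↑x, hx⟩)
    exact e_Ψsphere s x (sphere_of_memA x hx) hx
  obtain ⟨κB, eκ1, eκ2⟩ :=
    attach_glue hSph hInj hBall hWeak hAB ψA'.curry ΨD'.curry κcompat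
  set ψB : C(unitInterval × ↥Bs, E) := κB.uncurry.comp ⟨Prod.swap, continuous_swap⟩
    with hψBdef
  have ψB_eval : ∀ (t : unitInterval) (b : ↥Bs), ψB (t, b) = κB b t := fun t b => rfl
  have cases_b : ∀ b : ↥Bs, ((b : Y) ∈ A) ∨ ∃ x : Disk n, Φ ↑x = (b : Y) := by
    intro b
    by_cases h : (b : Y) ∈ A
    · exact Or.inl h
    · right
      have hmem : (b : Y) ∈ Φ '' Metric.ball 0 1 := by rw [hBall]; exact ⟨b.2, h⟩
      obtain ⟨v, hv, hΦv⟩ := hmem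
      exact ⟨⟨v, Metric.ball_subset_closedBall hv⟩, hΦv⟩
  have r5zero : r5 0 = 0 := by
    show prj (5 * ((0 : unitInterval) : ℝ) / 4) = 0
    rw [show (5 : ℝ) * ((0 : unitInterval) : ℝ) / 4 = 0 from by norm_num]
    exact prj_zero
  have r5one : r5 1 = 1 := by
    show prj (5 * ((1 : unitInterval) : ℝ) / 4) = 1
    exact prj_one_of_ge (by norm_num)
  refine ⟨hB, ψB, ?_, ?_, ?_, ?_, ?_⟩
  · -- p ∘ hB = F
    intro b
    rcases cases_b b with ha | ⟨x, hx⟩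
    · rw [show b = ⟨(b : Y), b.2⟩ from rfl, eB1 _ ha b.2, h1]
    · rw [show b = ⟨Φ ↑x, hx ▸ b.2⟩ from Subtype.ext hx.symm, eB2 x _, e_pH]
    
  · -- ψB at 0 is G
    intro b
    rw [ψB_eval]
    rcases cases_b b with ha | ⟨x, hx⟩
    · rw [show b = ⟨(b : Y), b.2⟩ from rfl, eκ1 _ ha b.2]
      show ψ (r5 0, ⟨(b : Y), ha⟩) = G ↑b
      rw [r5zero, h2]
    · rw [show b = ⟨Φ ↑x, hx ▸ b.2⟩ from Subtype.ext hx.symm, eκ2 x _]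
      show Ψcell (0, x) = _
      rw [e_Ψ0]
  · -- ψB at 1 is hB
    intro b
    rw [ψB_eval]
    rcases cases_b b with ha | ⟨x, hx⟩
    · rw [show b = ⟨(b : Y), b.2⟩ from rfl, eκ1 _ ha b.2, eB1 _ ha b.2]
      show ψ (r5 1, ⟨(b : Y), ha⟩) = hA ⟨(b : Y), ha⟩
      rw [r5one, h3]
    · rw [show b = ⟨Φ ↑x, hx ▸ b.2⟩ from Subtype.ext hx.symm, eκ2 x _, eB2 x _]
      show Ψcell (1, x) = Hcell x
      exact e_Ψ1 x
  · -- ψB is fibrewise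
    intro t b
    rw [ψB_eval]
    rcases cases_b b with ha | ⟨x, hx⟩
    · rw [show b = ⟨(b : Y), b.2⟩ from rfl, eκ1 _ ha b.2]
      show p (ψ (r5 t, ⟨(b : Y), ha⟩)) = _
      rw [h4]
    · rw [show b = ⟨Φ ↑x, hx ▸ b.2⟩ from Subtype.ext hx.symm, eκ2 x _]
      show p (Ψcell (t, x)) = _
      rw [e_pΨ]
  · -- hB extends hA
    exact eB1

end SMF

/-- Given a Serre microfibration `p : E → B`, a finite CW pair `(Y, X)`, a map
`F : Y → B`, and a partial lift `f : X → E`: if there is a full lift `G : Y → E` of `F`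
whose restriction to `X` is fibrewise homotopic to `f`, then there is a full lift
`H : Y → E` of `F` with `H|_X = f`. -/
theorem serreMicrofibration_lift_of_fibrewise_homotopic {E B Y : Type*}
    [TopologicalSpace E] [TopologicalSpace B] [TopologicalSpace Y]
    (p : E → B) (hp : IsSerreMicrofibration p)
    (X : Set Y) (hXY : IsFiniteCWPair X)
    (F : C(Y, B)) (f : C(↥X, E)) (hf : ∀ x : ↥X, p (f x) = F ↑x)
    (G : C(Y, E)) (hG : ∀ y : Y, p (G y) = F y)
    (φ : C(unitInterval × ↥X, E))
    (hφ0 : ∀ x : ↥X, φ (0, x) = G ↑x) (hφ1 : ∀ x : ↥X, φ (1, x) = f x)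
    (hφp : ∀ (t : unitInterval) (x : ↥X), p (φ (t, x)) = F ↑x) :
    ∃ H : C(Y, E), (∀ y : Y, p (H y) = F y) ∧ ∀ x : ↥X, H ↑x = f x := by
  classical
  obtain ⟨-, -, -, hrel⟩ := hXY
  obtain ⟨m, Fil, hF0, hFm, hstep⟩ := hrel
  have main : ∀ k, k ≤ m →
      ∃ (hk : C(↥(Fil k), E)) (ψk : C(unitInterval × ↥(Fil k), E)),
      X ⊆ Fil k ∧ (∀ a, p (hk a) = F ↑a) ∧ (∀ a, ψk (0, a) = G ↑a) ∧
      (∀ a, ψk (1, a) = hk a) ∧ (∀ (t : unitInterval) a, p (ψk (t, a)) = F ↑a) ∧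
      (∀ (y : Y) (hy : y ∈ X) (hk' : y ∈ Fil k), hk ⟨y, hk'⟩ = f ⟨y, hy⟩) := by
    intro k
    induction k with
    | zero =>
      intro _
      rw [hF0]
      exact ⟨f, φ, subset_rfl, hf, hφ0, hφ1, hφp, fun y hy hk' => rfl⟩
    | succ k ih =>
      intro hk1
      obtain ⟨hk, ψk, hXk, c1, c2, c3, c4, c5⟩ := ih (le_of_lt (Nat.lt_of_succ_le hk1))
      obtain ⟨nn, att⟩ := hstep k (Nat.lt_of_succ_le hk1)
      obtain ⟨hABk, -⟩ := id att
      obtain ⟨hB, ψB, d1, d2, d3, d4, d5⟩ :=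
        SMF.cell_step p hp F G hG att hk ψk c1 c2 c3 c4
      exact ⟨hB, ψB, subset_trans hXk hABk, d1, d2, d3, d4,
        fun y hy hk' => by rw [d5 y (hXk hy) hk', c5 y hy (hXk hy)]⟩
  obtain ⟨hm, ψm, -, c1, -, -, -, c5⟩ := main m (le_refl m)
  have hmem : ∀ y : Y, y ∈ Fil m := by intro y; rw [hFm]; trivial
  refine ⟨hm.comp ⟨fun y => ⟨y, hmem y⟩, Continuous.subtype_mk continuous_id _⟩, ?_, ?_⟩
  · intro y
    exact c1 ⟨y, hmem y⟩
  · intro x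
    show hm ⟨↑x, hmem ↑x⟩ = f x
    rw [c5 ↑x x.2 (hmem ↑x)]
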